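/- Let $X = [0,1]$ with the measure $\mu(\sigma) = \int_\sigma x^{-1/2}\, dx$ on Borel sets, and let $\mathbf{A}(x) = 1-x$. Then the set $\{f \in L^2(\mu) : \int_0^1 |f(x)|^2 \sqrt{x/(1-x)}\, d\mu(x) < \infty\}$ is a proper subset of $L^2(\mu)$; in particular there exists $f \in L^2(\mu)$ with $\int_0^1 |f(x)|^2 \sqrt{x/(1-x)}\, \frac{dx}{\sqrt{x}} = \infty$. -/

import Mathlib

open MeasureTheory

lemma aux_meas_rho : Measurable (fun x : ℝ => ENNReal.ofReal (1 / Real.sqrt x)) :=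
  (measurable_const.div Real.continuous_sqrt.measurable).ennreal_ofReal

lemma aux_meas_f : Measurable (fun x : ℝ => (1 - x) ^ (-(1/4) : ℝ)) := by fun_prop

lemma aux_fsq {x : ℝ} (hx : x ≤ 1) :
    ((1 - x) ^ (-(1/4) : ℝ)) ^ 2 = (1 - x) ^ (-(1/2) : ℝ) := by
  rw [← Real.rpow_natCast ((1 - x) ^ (-(1/4) : ℝ)) 2, ← Real.rpow_mul (by linarith)]
  norm_num

/-- `x ^ (-1/2)` is integrable on `(0,1)`. -/
lemma aux_int1 : IntervalIntegrable (fun x : ℝ => x ^ (-(1/2) : ℝ)) volume 0 1 :=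
  intervalIntegral.intervalIntegrable_rpow' (by norm_num)

lemma aux_int2 : IntervalIntegrable (fun x : ℝ => (1 - x) ^ (-(1/2) : ℝ)) volume 0 1 := by
  have := (aux_int1.comp_sub_left 1).symm
  simpa using this

theorem stmt_4 :
    ∃ f : ℝ → ℝ,
      MemLp f 2 ((volume.restrict (Set.Icc (0 : ℝ) 1)).withDensity
        (fun x => ENNReal.ofReal (1 / Real.sqrt x))) ∧
      ∫⁻ x, ENNReal.ofReal ((f x) ^ 2 * Real.sqrt (x / (1 - x)))
        ∂((volume.restrict (Set.Icc (0 : ℝ) 1)).withDensity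
          (fun x => ENNReal.ofReal (1 / Real.sqrt x))) = ⊤ := by
  set ρ : ℝ → ENNReal := fun x => ENNReal.ofReal (1 / Real.sqrt x) with hρ
  set μ : Measure ℝ := (volume.restrict (Set.Icc (0 : ℝ) 1)).withDensity ρ with hμ
  refine ⟨fun x => (1 - x) ^ (-(1/4) : ℝ), ?_, ?_⟩
  · -- Membership in L²
    rw [memLp_two_iff_integrable_sq aux_meas_f.aestronglyMeasurable]
    rw [hμ, integrable_withDensity_iff aux_meas_rho
      (Filter.Eventually.of_forall fun x => ENNReal.ofReal_lt_top)]
    set C : ℝ := (1/2 : ℝ) ^ (-(1/2) : ℝ) with hC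
    have hC0 : 0 ≤ C := Real.rpow_nonneg (by norm_num) _
    -- integrable bound
    have hbound : Integrable
        (fun x : ℝ => C * x ^ (-(1/2) : ℝ) + C * (1 - x) ^ (-(1/2) : ℝ))
        (volume.restrict (Set.Icc (0:ℝ) 1)) := by
      have h1 : IntegrableOn (fun x : ℝ => x ^ (-(1/2) : ℝ)) (Set.Icc (0:ℝ) 1) := by
        rw [integrableOn_Icc_iff_integrableOn_Ioo]
        exact (intervalIntegrable_iff_integrableOn_Ioo_of_le zero_le_one).1 aux_int1
      have h2 : IntegrableOn (fun x : ℝ => (1 - x) ^ (-(1/2) : ℝ)) (Set.Icc (0:ℝ) 1) := by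
        rw [integrableOn_Icc_iff_integrableOn_Ioo]
        exact (intervalIntegrable_iff_integrableOn_Ioo_of_le zero_le_one).1 aux_int2
      exact (h1.const_mul C).add (h2.const_mul C)
    refine hbound.mono' ?_ ?_
    · exact ((aux_meas_f.pow_const 2).mul
        (aux_meas_rho.ennreal_toReal)).aestronglyMeasurable
    · filter_upwards [ae_restrict_mem measurableSet_Icc] with x hx
      obtain ⟨hx0, hx1⟩ := hx
      have hsx : Real.sqrt x = x ^ ((1:ℝ)/2) := Real.sqrt_eq_rpow x
      have h1x : (0:ℝ) ≤ 1 - x := by linarith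
      have htoReal : (ρ x).toReal = 1 / Real.sqrt x := by
        rw [hρ, ENNReal.toReal_ofReal]
        positivity
      rw [Real.norm_eq_abs, aux_fsq hx1, htoReal]
      have habs : |(1 - x) ^ (-(1/2) : ℝ) * (1 / Real.sqrt x)|
          = (1 - x) ^ (-(1/2) : ℝ) * (1 / Real.sqrt x) := by
        apply abs_of_nonneg
        have := Real.rpow_nonneg h1x (-(1/2) : ℝ)
        have := Real.sqrt_nonneg x
        positivity
      rw [habs]
      have hinv : 1 / Real.sqrt x = x ^ (-(1/2) : ℝ) := by
        rw [hsx, one_div, ← Real.rpow_neg hx0]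
      rw [hinv]
      -- case split on x ≤ 1/2 or 1/2 ≤ x
      have hx' : (0:ℝ) ≤ x ^ (-(1/2) : ℝ) := Real.rpow_nonneg hx0 _
      have h1x' : (0:ℝ) ≤ (1 - x) ^ (-(1/2) : ℝ) := Real.rpow_nonneg h1x _
      rcases le_total x (1/2) with h | h
      · have hb : (1 - x) ^ (-(1/2) : ℝ) ≤ C :=
          Real.rpow_le_rpow_of_nonpos (by norm_num) (by linarith) (by norm_num)
        calc (1 - x) ^ (-(1/2) : ℝ) * x ^ (-(1/2) : ℝ)
            ≤ C * x ^ (-(1/2) : ℝ) := by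
              exact mul_le_mul_of_nonneg_right hb hx'
          _ ≤ C * x ^ (-(1/2) : ℝ) + C * (1 - x) ^ (-(1/2) : ℝ) := by
              nlinarith
      · have hb : x ^ (-(1/2) : ℝ) ≤ C :=
          Real.rpow_le_rpow_of_nonpos (by norm_num) (by linarith) (by norm_num)
        calc (1 - x) ^ (-(1/2) : ℝ) * x ^ (-(1/2) : ℝ)
            ≤ (1 - x) ^ (-(1/2) : ℝ) * C := by
              exact mul_le_mul_of_nonneg_left hb h1x'
          _ ≤ C * x ^ (-(1/2) : ℝ) + C * (1 - x) ^ (-(1/2) : ℝ) := by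
              nlinarith
  · -- Divergence of the integral
    have hg : Measurable (fun x : ℝ =>
        ENNReal.ofReal (((1 - x) ^ (-(1/4) : ℝ)) ^ 2 * Real.sqrt (x / (1 - x)))) := by
      apply Measurable.ennreal_ofReal
      exact (aux_meas_f.pow_const 2).mul
        ((measurable_id.div (measurable_const.sub measurable_id)).sqrt)
    rw [hμ, lintegral_withDensity_eq_lintegral_mul _ aux_meas_rho hg]
    rw [eq_top_iff]
    calc (⊤ : ENNReal)
        = ∫⁻ x in Set.Ioo (0:ℝ) 1, ENNReal.ofReal ((1 - x)⁻¹) := by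
          symm
          by_contra h
          have hmeas : Measurable (fun x : ℝ => (1 - x)⁻¹) :=
            (measurable_const.sub measurable_id).inv
          have hnonneg : 0 ≤ᵐ[volume.restrict (Set.Ioo (0:ℝ) 1)]
              (fun x : ℝ => (1 - x)⁻¹) := by
            filter_upwards [ae_restrict_mem measurableSet_Ioo] with x hx
            have : (0:ℝ) < 1 - x := by linarith [hx.2]
            positivity
          have hint : Integrable (fun x : ℝ => (1 - x)⁻¹)
              (volume.restrict (Set.Ioo (0:ℝ) 1)) := by
            refine ⟨hmeas.aestronglyMeasurable, ?_⟩
            rw [hasFiniteIntegral_iff_ofReal hnonneg]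
            exact lt_top_iff_ne_top.2 h
          have hii : IntervalIntegrable (fun x : ℝ => (1 - x)⁻¹) volume 0 1 :=
            (intervalIntegrable_iff_integrableOn_Ioo_of_le zero_le_one).2 hint
          have hii2 := (hii.comp_sub_left 1).symm
          simp only [sub_sub_cancel, sub_zero, sub_self] at hii2
          rw [intervalIntegrable_inv_iff] at hii2
          rcases hii2 with h' | h'
          · norm_num at h'
          · exact h' (by simp [Set.uIcc_of_le (zero_le_one : (0:ℝ) ≤ 1)])
      _ = ∫⁻ x in Set.Ioo (0:ℝ) 1, (ρ * fun x : ℝ =>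
            ENNReal.ofReal (((1 - x) ^ (-(1/4) : ℝ)) ^ 2 * Real.sqrt (x / (1 - x)))) x := by
          refine setLIntegral_congr_fun measurableSet_Ioo
            (fun x hx => ?_)
          obtain ⟨hx0, hx1⟩ := hx
          have h1x : (0:ℝ) < 1 - x := by linarith
          have hsx : (0:ℝ) < Real.sqrt x := Real.sqrt_pos.2 hx0
          have hs1x : (0:ℝ) < Real.sqrt (1 - x) := Real.sqrt_pos.2 h1x
          simp only [hρ, Pi.mul_apply]
          rw [aux_fsq hx1.le, ← ENNReal.ofReal_mul (by positivity)]
          congr 1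
          have h12 : (1 - x) ^ (-(1/2) : ℝ) = (Real.sqrt (1 - x))⁻¹ := by
            rw [Real.sqrt_eq_rpow, ← Real.rpow_neg h1x.le, one_div]
          rw [h12, Real.sqrt_div hx0.le]
          have ht : Real.sqrt (1 - x) * Real.sqrt (1 - x) = 1 - x :=
            Real.mul_self_sqrt h1x.le
          field_simp
          exact Real.sq_sqrt h1x.le
      _ ≤ ∫⁻ x in Set.Icc (0:ℝ) 1, (ρ * fun x : ℝ =>
            ENNReal.ofReal (((1 - x) ^ (-(1/4) : ℝ)) ^ 2 * Real.sqrt (x / (1 - x)))) x :=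
          lintegral_mono_set Set.Ioo_subset_Icc_self
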